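/- Let c∈(−1,0], x∈ℝ, and set θ := c(e^{x}−1). Then: (i) if x>0, one has 0 ≤ log(1−θ) ≤ e^{x}−1; (ii) if −1≤x<0, one has 0 ≥ log(1−θ) ≥ (log(1−c(e^{−1}−1))/(e^{−1}−1))·(e^{x}−1); (iii) if x≤−1, one has 0 ≥ log(1−θ) ≥ log(1+c). -/
import Mathlib


theorem log_one_sub_theta_pointwise_bounds (c x : ℝ) (hc1 : -1 < c) (hc2 : c ≤ 0) :
    (0 < x →
      0 ≤ Real.log (1 - c * (Real.exp x - 1)) ∧
      Real.log (1 - c * (Real.exp x - 1)) ≤ Real.exp x - 1) ∧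
    (-1 ≤ x → x < 0 →
      Real.log (1 - c * (Real.exp x - 1)) ≤ 0 ∧
      Real.log (1 - c * (Real.exp (-1) - 1)) / (Real.exp (-1) - 1) * (Real.exp x - 1)
        ≤ Real.log (1 - c * (Real.exp x - 1))) ∧
    (x ≤ -1 →
      Real.log (1 - c * (Real.exp x - 1)) ≤ 0 ∧
      Real.log (1 + c) ≤ Real.log (1 - c * (Real.exp x - 1))) := by
  have hcn : -c < 1 := by linarith
  have h1 : Real.exp (-1) - 1 < 0 := by
    have := Real.exp_lt_one_iff.mpr (show (-1:ℝ) < 0 by norm_num)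
    linarith
  have h2 : (-1:ℝ) < Real.exp (-1) - 1 := by
    have := Real.exp_pos (-1); linarith
  refine ⟨?_, ?_, ?_⟩
  · intro hx
    have hex : 0 < Real.exp x - 1 := by
      have h := Real.exp_lt_exp.mpr hx
      rw [Real.exp_zero] at h; linarith
    have hθ : c * (Real.exp x - 1) ≤ 0 := mul_nonpos_of_nonpos_of_nonneg hc2 hex.le
    constructor
    · exact Real.log_nonneg (by linarith)
    · have h := Real.log_le_sub_one_of_pos (show (0:ℝ) < 1 - c * (Real.exp x - 1) by linarith)
      nlinarith [mul_pos (show (0:ℝ) < 1 + c by linarith) hex]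
  · intro hx1 hx2
    set u₀ : ℝ := Real.exp (-1) - 1 with hu₀def
    set u : ℝ := Real.exp x - 1 with hudef
    have hu_lt : u < 0 := by
      have h := Real.exp_lt_exp.mpr hx2
      rw [Real.exp_zero] at h; simp only [hudef]; linarith
    have hu_ge : u₀ ≤ u := by
      have h := Real.exp_le_exp.mpr hx1
      simp only [hudef, hu₀def]; linarith
    have hexp : 0 < Real.exp x := Real.exp_pos x
    have hcu : 0 ≤ c * u := by nlinarith [mul_nonneg (show (0:ℝ) ≤ -c by linarith) (show (0:ℝ) ≤ -u by linarith)]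
    have hcu1 : c * u < 1 := by
      nlinarith [mul_nonneg (show (0:ℝ) ≤ 1 + c by linarith) (show (0:ℝ) ≤ -u by linarith)]
    have hcu₀1 : c * u₀ < 1 := by
      nlinarith [mul_nonneg (show (0:ℝ) ≤ 1 + c by linarith) (show (0:ℝ) ≤ -u₀ by linarith)]
    constructor
    · exact Real.log_nonpos (by linarith) (by linarith)
    · set t : ℝ := u / u₀ with htdef
      have hu₀ne : u₀ ≠ 0 := ne_of_lt h1
      have ht0 : 0 < t := by
        rw [htdef]
        exact div_pos_of_neg_of_neg hu_lt h1
      have ht1 : t ≤ 1 := by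
        rw [htdef, div_le_one_of_neg h1]
        exact hu_ge
      have htu : t * u₀ = u := div_mul_cancel₀ u hu₀ne
      have hpos : (0:ℝ) < 1 - c * u₀ := by linarith
      have key := (strictConcaveOn_log_Ioi.concaveOn).2 (Set.mem_Ioi.mpr hpos)
        (Set.mem_Ioi.mpr one_pos) ht0.le (by linarith : (0:ℝ) ≤ 1 - t) (by ring)
      simp only [smul_eq_mul, Real.log_one, mul_zero, add_zero, mul_one] at key
      have harg : t * (1 - c * u₀) + (1 - t) = 1 - c * u := by
        rw [← htu]; ring
      rw [harg] at key
      calc Real.log (1 - c * u₀) / u₀ * u = Real.log (1 - c * u₀) * t := by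
            rw [htdef]; ring
        _ ≤ Real.log (1 - c * u) := by linarith
  · intro hx
    have hex : Real.exp x ≤ Real.exp (-1) := Real.exp_le_exp.mpr hx
    have hexp : 0 < Real.exp x := Real.exp_pos x
    have hcu : 0 ≤ c * (Real.exp x - 1) := by
      nlinarith [mul_nonneg (show (0:ℝ) ≤ -c by linarith) (show (0:ℝ) ≤ 1 - Real.exp x by linarith)]
    have hcu1 : c * (Real.exp x - 1) < 1 := by
      nlinarith [mul_nonneg (show (0:ℝ) ≤ 1 + c by linarith)
        (show (0:ℝ) ≤ 1 - Real.exp x by linarith)]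
    constructor
    · exact Real.log_nonpos (by linarith) (by linarith)
    · apply Real.log_le_log (by linarith : (0:ℝ) < 1 + c)
      nlinarith [mul_nonneg (show (0:ℝ) ≤ -c by linarith) hexp.le]
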